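/- For every i, the function y_i ↦ L (with all x_k and all y_k for k ≠ i held fixed) is differentiable, and its gradient equals ∇_{y_i}L = −(2/(N·τ)) · [ 2(x_i − y_i) − Σ_{k=1}^N (Q^x(k,i) + Q^y(k,i))·(x_k − y_i) ], where Q^x, Q^y are evaluated at the current points. -/

import Mathlib

/-!
STATEMENT 4: For every `i`, the map `y_i ↦ L` (all other points fixed) is differentiable
with gradient
`∇_{y_i}L = −(2/(N·τ)) • [2(x_i − y_i) − Σ_k (Q^x(k,i) + Q^y(k,i)) • (x_k − y_i)]`.
`HasGradientAt` expresses both the differentiability and the value of the gradient.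
-/

open RealInnerProductSpace

/-- Softmax assignment matrix `Q^x(i,j)` (rows sum to one). -/
noncomputable def Qx {d N : ℕ} (τ : ℝ) (x y : Fin N → EuclideanSpace ℝ (Fin d))
    (i j : Fin N) : ℝ :=
  Real.exp (-‖x i - y j‖ ^ 2 / τ) / ∑ j', Real.exp (-‖x i - y j'‖ ^ 2 / τ)

/-- Softmax assignment matrix `Q^y(i,j)` (columns sum to one). -/
noncomputable def Qy {d N : ℕ} (τ : ℝ) (x y : Fin N → EuclideanSpace ℝ (Fin d))
    (i j : Fin N) : ℝ :=
  Real.exp (-‖x i - y j‖ ^ 2 / τ) / ∑ i', Real.exp (-‖x i' - y j‖ ^ 2 / τ)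

/-- The multimodal contrastive loss
`L = −(1/N) Σ_i (log Q^x(i,i) + log Q^y(i,i))`. -/
noncomputable def contrastiveLoss {d N : ℕ} (τ : ℝ)
    (x y : Fin N → EuclideanSpace ℝ (Fin d)) : ℝ :=
  -(1 / (N : ℝ)) * ∑ i, (Real.log (Qx τ x y i i) + Real.log (Qy τ x y i i))


section AuxGrad
variable {E : Type*} [NormedAddCommGroup E] [InnerProductSpace ℝ E] [CompleteSpace E]

lemma gradAux_compDeriv {f : E → ℝ} {g : E} {x : E} {h : ℝ → ℝ} {h' : ℝ}
    (hh : HasDerivAt h h' (f x)) (hf : HasGradientAt f g x) :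
    HasGradientAt (fun z => h (f z)) (h' • g) x := by
  rw [hasGradientAt_iff_hasFDerivAt] at *
  simpa [Function.comp_def] using hh.comp_hasFDerivAt x hf

lemma gradAux_sum {ι : Type*} (s : Finset ι) {f : ι → E → ℝ} {g : ι → E} {x : E}
    (hf : ∀ k ∈ s, HasGradientAt (f k) (g k) x) :
    HasGradientAt (fun z => ∑ k ∈ s, f k z) (∑ k ∈ s, g k) x := by
  rw [hasGradientAt_iff_hasFDerivAt]
  simp only [hasGradientAt_iff_hasFDerivAt] at hf
  simpa using HasFDerivAt.fun_sum hf

lemma gradAux_add {f₁ f₂ : E → ℝ} {g₁ g₂ : E} {x : E}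
    (h₁ : HasGradientAt f₁ g₁ x) (h₂ : HasGradientAt f₂ g₂ x) :
    HasGradientAt (fun z => f₁ z + f₂ z) (g₁ + g₂) x := by
  rw [hasGradientAt_iff_hasFDerivAt] at *
  simpa using h₁.fun_add h₂

lemma gradAux_sub {f₁ f₂ : E → ℝ} {g₁ g₂ : E} {x : E}
    (h₁ : HasGradientAt f₁ g₁ x) (h₂ : HasGradientAt f₂ g₂ x) :
    HasGradientAt (fun z => f₁ z - f₂ z) (g₁ - g₂) x := by
  rw [hasGradientAt_iff_hasFDerivAt] at *
  simpa using h₁.fun_sub h₂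

lemma gradAux_const (c : ℝ) (x : E) : HasGradientAt (fun _ : E => c) 0 x := by
  rw [hasGradientAt_iff_hasFDerivAt]
  simpa using hasFDerivAt_const (𝕜 := ℝ) c x

lemma gradAux_const_mul {f : E → ℝ} {g : E} {x : E} (c : ℝ)
    (hf : HasGradientAt f g x) :
    HasGradientAt (fun z => c * f z) (c • g) x :=
  gradAux_compDeriv (by simpa using (hasDerivAt_id (f x)).const_mul c) hf

lemma gradAux_norm_sub_sq (c x : E) :
    HasGradientAt (fun z : E => ‖c - z‖ ^ 2) ((2:ℝ) • (x - c)) x := by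
  have h1 : HasFDerivAt (fun z : E => c - z) (-(ContinuousLinearMap.id ℝ E)) x := by
    simpa using ((hasFDerivAt_const (𝕜 := ℝ) c x).fun_sub (hasFDerivAt_id x))
  have h2 := HasFDerivAt.inner (𝕜 := ℝ) h1 h1
  rw [hasGradientAt_iff_hasFDerivAt]
  have heq : (fun z : E => ‖c - z‖ ^ 2) = fun z : E => ⟪c - z, c - z⟫ := by
    funext z; rw [real_inner_self_eq_norm_sq]
  rw [heq]
  convert h2 using 1
  · rfl
  ext v
  simp [InnerProductSpace.toDual_apply_apply, fderivInnerCLM_apply, real_inner_smul_left, inner_sub_left, inner_sub_right, real_inner_comm]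
  ring

/-- gradient of `z ↦ -‖c - z‖² / τ` -/
lemma gradAux_neg_sq_div (c x : E) (τ : ℝ) :
    HasGradientAt (fun z : E => -‖c - z‖ ^ 2 / τ)
      ((-1/τ) • ((2:ℝ) • (x - c))) x := by
  have h := gradAux_compDeriv (h := fun t => -t / τ) (h' := -1/τ)
    (by simpa using ((hasDerivAt_id (‖c - x‖^2)).neg.div_const τ)) (gradAux_norm_sub_sq c x)
  exact h

/-- gradient of `z ↦ exp (-‖c - z‖² / τ)` -/
lemma gradAux_exp_neg_sq (c x : E) (τ : ℝ) :
    HasGradientAt (fun z : E => Real.exp (-‖c - z‖ ^ 2 / τ))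
      (Real.exp (-‖c - x‖ ^ 2 / τ) • ((-1/τ) • ((2:ℝ) • (x - c)))) x := by
  have h := gradAux_compDeriv (h := Real.exp)
    (Real.hasDerivAt_exp _) (gradAux_neg_sq_div c x τ)
  simpa using h

end AuxGrad

theorem gradient_of_contrastive_loss
    (d N : ℕ) (hd : 0 < d) (hN : 0 < N) (τ : ℝ) (hτ : 0 < τ)
    (x y : Fin N → EuclideanSpace ℝ (Fin d)) (i : Fin N) :
    HasGradientAt (fun z => contrastiveLoss τ x (Function.update y i z))
      ((-(2 / ((N : ℝ) * τ))) •
        ((2 : ℝ) • (x i - y i) - ∑ k, (Qx τ x y k i + Qy τ x y k i) • (x k - y i)))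
      (y i) := by
  classical
  have : Nonempty (Fin N) := ⟨⟨0, hN⟩⟩
  -- the loss as an explicit function of z
  have hfun : (fun z => contrastiveLoss τ x (Function.update y i z)) =
      fun z : EuclideanSpace ℝ (Fin d) => (-(1/(N:ℝ))) * ∑ k,
        (((-‖x k - Function.update y i z k‖^2/τ)
            - Real.log (∑ j, Real.exp (-‖x k - Function.update y i z j‖^2/τ)))
          + ((-‖x k - Function.update y i z k‖^2/τ)
            - Real.log (∑ k', Real.exp (-‖x k' - Function.update y i z k‖^2/τ)))) := by
    funext z
    unfold contrastiveLoss Qx Qy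
    congr 1
    refine Finset.sum_congr rfl fun k _ => ?_
    rw [Real.log_div (Real.exp_pos _).ne'
        (Finset.sum_pos (fun j _ => Real.exp_pos _) Finset.univ_nonempty).ne',
      Real.log_div (Real.exp_pos _).ne'
        (Finset.sum_pos (fun j _ => Real.exp_pos _) Finset.univ_nonempty).ne',
      Real.log_exp]
  rw [hfun]
  -- per-k gradients
  set G : Fin N → EuclideanSpace ℝ (Fin d) := fun k =>
    ((if k = i then (-1/τ) • ((2:ℝ) • (y i - x i)) else 0)
      - (∑ j, Real.exp (-‖x k - y j‖^2/τ))⁻¹ •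
          (Real.exp (-‖x k - y i‖^2/τ) • ((-1/τ) • ((2:ℝ) • (y i - x k)))))
    + (if k = i then
        ((-1/τ) • ((2:ℝ) • (y i - x i))
          - (∑ k', Real.exp (-‖x k' - y i‖^2/τ))⁻¹ •
              (∑ k', Real.exp (-‖x k' - y i‖^2/τ) • ((-1/τ) • ((2:ℝ) • (y i - x k')))))
      else 0) with hG
  have hgrad : ∀ k : Fin N, HasGradientAt
      (fun z : EuclideanSpace ℝ (Fin d) =>
        ((-‖x k - Function.update y i z k‖^2/τ)
            - Real.log (∑ j, Real.exp (-‖x k - Function.update y i z j‖^2/τ)))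
          + ((-‖x k - Function.update y i z k‖^2/τ)
            - Real.log (∑ k', Real.exp (-‖x k' - Function.update y i z k‖^2/τ))))
      (G k) (y i) := by
    intro k
    rw [hG]
    refine gradAux_add (gradAux_sub ?_ ?_) ?_
    · by_cases hk : k = i
      · subst hk
        simp only [Function.update_self, if_pos rfl]
        exact gradAux_neg_sq_div (x k) (y k) τ
      · simp only [Function.update_of_ne hk, if_neg hk]
        exact gradAux_const _ _
    · have hsum : HasGradientAt
          (fun z => ∑ j, Real.exp (-‖x k - Function.update y i z j‖^2/τ))
          (∑ j, if j = i then
              Real.exp (-‖x k - y i‖^2/τ) • ((-1/τ) • ((2:ℝ) • (y i - x k))) else 0)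
          (y i) := by
        refine gradAux_sum Finset.univ fun j _ => ?_
        by_cases hj : j = i
        · subst hj
          simp only [Function.update_self, if_pos rfl]
          exact gradAux_exp_neg_sq (x k) (y j) τ
        · simp only [Function.update_of_ne hj, if_neg hj]
          exact gradAux_const _ _
      rw [Finset.sum_ite_eq' Finset.univ i] at hsum
      simp only [Finset.mem_univ, if_true] at hsum
      have hpos : (0:ℝ) < ∑ j, Real.exp (-‖x k - y j‖^2/τ) :=
        Finset.sum_pos (fun j _ => Real.exp_pos _) Finset.univ_nonempty
      have hlog : HasDerivAt Real.log (∑ j, Real.exp (-‖x k - y j‖^2/τ))⁻¹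
          ((fun z => ∑ j, Real.exp (-‖x k - Function.update y i z j‖^2/τ)) (y i)) := by
        simp only [Function.update_eq_self]
        exact Real.hasDerivAt_log hpos.ne'
      exact gradAux_compDeriv hlog hsum
    · by_cases hk : k = i
      · subst hk
        simp only [Function.update_self, if_pos rfl]
        refine gradAux_sub (gradAux_neg_sq_div (x k) (y k) τ) ?_
        have hsum : HasGradientAt (fun z => ∑ k', Real.exp (-‖x k' - z‖^2/τ))
            (∑ k', Real.exp (-‖x k' - y k‖^2/τ) • ((-1/τ) • ((2:ℝ) • (y k - x k'))))
            (y k) :=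
          gradAux_sum Finset.univ fun k' _ => gradAux_exp_neg_sq (x k') (y k) τ
        have hpos : (0:ℝ) < ∑ k', Real.exp (-‖x k' - y k‖^2/τ) :=
          Finset.sum_pos (fun j _ => Real.exp_pos _) Finset.univ_nonempty
        exact gradAux_compDeriv (Real.hasDerivAt_log hpos.ne') hsum
      · simp only [Function.update_of_ne hk, if_neg hk]
        exact gradAux_const _ _
  have hmain := gradAux_const_mul (-(1/(N:ℝ)))
    (gradAux_sum Finset.univ (fun k _ => hgrad k))
  have hveq : ((-(2 / ((N : ℝ) * τ))) •
        ((2 : ℝ) • (x i - y i) - ∑ k, (Qx τ x y k i + Qy τ x y k i) • (x k - y i)))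
      = (-(1/(N:ℝ))) • ∑ k, G k := by
    have hsplit : ∑ k, G k =
        ((-1/τ) • ((2:ℝ) • (y i - x i))
          - ∑ k, (∑ j, Real.exp (-‖x k - y j‖^2/τ))⁻¹ •
              (Real.exp (-‖x k - y i‖^2/τ) • ((-1/τ) • ((2:ℝ) • (y i - x k)))))
        + ((-1/τ) • ((2:ℝ) • (y i - x i))
          - (∑ k', Real.exp (-‖x k' - y i‖^2/τ))⁻¹ •
              (∑ k', Real.exp (-‖x k' - y i‖^2/τ) •
                ((-1/τ) • ((2:ℝ) • (y i - x k'))))) := by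
      rw [hG]
      rw [Finset.sum_add_distrib, Finset.sum_sub_distrib,
        Finset.sum_ite_eq' Finset.univ i, Finset.sum_ite_eq' Finset.univ i]
      simp only [Finset.mem_univ, if_true]
    rw [hsplit]
    have e1 : ∑ k, (∑ j, Real.exp (-‖x k - y j‖^2/τ))⁻¹ •
        (Real.exp (-‖x k - y i‖^2/τ) • ((-1/τ) • ((2:ℝ) • (y i - x k))))
        = (2/τ) • ∑ k, Qx τ x y k i • (x k - y i) := by
      rw [Finset.smul_sum]
      refine Finset.sum_congr rfl fun k _ => ?_
      simp only [Qx]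
      module
    have e2 : (∑ k', Real.exp (-‖x k' - y i‖^2/τ))⁻¹ •
        (∑ k', Real.exp (-‖x k' - y i‖^2/τ) • ((-1/τ) • ((2:ℝ) • (y i - x k'))))
        = (2/τ) • ∑ k, Qy τ x y k i • (x k - y i) := by
      rw [Finset.smul_sum, Finset.smul_sum]
      refine Finset.sum_congr rfl fun k _ => ?_
      simp only [Qy]
      module
    rw [e1, e2]
    have e3 : ∑ k, (Qx τ x y k i + Qy τ x y k i) • (x k - y i)
        = (∑ k, Qx τ x y k i • (x k - y i)) + ∑ k, Qy τ x y k i • (x k - y i) := by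
      rw [← Finset.sum_add_distrib]
      exact Finset.sum_congr rfl fun k _ => add_smul _ _ _
    rw [e3]
    module
  rw [hveq]
  exact hmain
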